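/- arXiv:1106.4622 — 4 statements merged into one kernel-verified Lean document; each statement's English description precedes it below -/
import Mathlib

section
/- Let N ≥ 2 be an integer and define ζ(N,s) = e^s - ∑_{k=0}^{N-2} s^k/k! = ∑_{k=N-1}^∞ s^k/k!. Then for all real s ≥ 0 and p ≥ 1, (ζ(N,s))^p ≤ ζ(N, p s). -/
/-- The truncated exponential `ζ(N,s) = e^s - ∑_{k=0}^{N-2} s^k/k!`. -/
noncomputable def zeta (N : ℕ) (s : ℝ) : ℝ :=
  Real.exp s - ∑ k ∈ Finset.range (N - 1), s ^ k / (Nat.factorial k : ℝ)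

lemma sum_hasDerivAt (m : ℕ) (s : ℝ) :
    HasDerivAt (fun x : ℝ => ∑ k ∈ Finset.range (m + 1), x ^ k / (Nat.factorial k : ℝ))
      (∑ k ∈ Finset.range m, s ^ k / (Nat.factorial k : ℝ)) s := by
  induction m with
  | zero => simpa using hasDerivAt_const s (1 : ℝ)
  | succ m ih =>
    have h1 : HasDerivAt (fun x : ℝ => x ^ (m + 1) / (Nat.factorial (m + 1) : ℝ))
        (s ^ m / (Nat.factorial m : ℝ)) s := by
      have := (hasDerivAt_pow (m + 1) s).div_const (Nat.factorial (m + 1) : ℝ)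
      refine this.congr_deriv ?_
      rw [Nat.factorial_succ, Nat.add_sub_cancel]
      push_cast
      have hm : (Nat.factorial m : ℝ) ≠ 0 := Nat.cast_ne_zero.2 (Nat.factorial_ne_zero m)
      field_simp
    have := ih.add h1
    simp only [← Finset.sum_range_succ] at this
    exact this.congr_of_eventuallyEq (Filter.Eventually.of_forall fun x => by simp [Finset.sum_range_succ])

lemma zeta_hasDerivAt (N : ℕ) (hN : 1 ≤ N) (s : ℝ) :
    HasDerivAt (zeta (N + 1)) (zeta N s) s := by
  obtain ⟨m, rfl⟩ := Nat.exists_eq_add_of_le hN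
  have h := (Real.hasDerivAt_exp s).sub (sum_hasDerivAt m s)
  unfold zeta
  rw [show 1 + m + 1 - 1 = m + 1 by omega, show 1 + m - 1 = m by omega]
  exact h

lemma zeta_nonneg (N : ℕ) (s : ℝ) (hs : 0 ≤ s) : 0 ≤ zeta N s :=
  sub_nonneg.2 (Real.sum_le_exp_of_nonneg hs _)

lemma zeta_succ_le (N : ℕ) (hN : 1 ≤ N) (s : ℝ) (hs : 0 ≤ s) : zeta (N + 1) s ≤ zeta N s := by
  obtain ⟨m, rfl⟩ := Nat.exists_eq_add_of_le hN
  unfold zeta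
  rw [show 1 + m + 1 - 1 = m + 1 by omega, show 1 + m - 1 = m by omega, Finset.sum_range_succ]
  have : 0 ≤ s ^ m / (Nat.factorial m : ℝ) := by positivity
  linarith

lemma zeta_zero (N : ℕ) (hN : 2 ≤ N) : zeta N 0 = 0 := by
  obtain ⟨m, rfl⟩ := Nat.exists_eq_add_of_le hN
  unfold zeta
  rw [show 2 + m - 1 = m + 1 from by omega, Finset.sum_range_succ']
  simp

lemma zeta_key (p : ℝ) (hp : 1 ≤ p) (N : ℕ) (hN : 1 ≤ N) :
    ∀ s : ℝ, 0 ≤ s → (zeta N s) ^ p ≤ zeta N (p * s) := by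
  induction N, hN using Nat.le_induction with
  | base =>
    intro s hs
    unfold zeta
    simp [← Real.exp_mul, mul_comm]
  | succ N hN ih =>
    intro s hs
    set f : ℝ → ℝ := fun x => zeta (N + 1) (p * x) - (zeta (N + 1) x) ^ p with hf
    have hp0 : (0 : ℝ) < p := lt_of_lt_of_le one_pos hp
    have hderiv : ∀ x : ℝ, HasDerivAt f
        (zeta N (p * x) * p - 1 * p * (zeta (N + 1) x) ^ (p - 1) * zeta N x) x := by
      intro x
      have h1 : HasDerivAt (fun y : ℝ => zeta (N + 1) (p * y)) (zeta N (p * x) * p) x := by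
        have hi : HasDerivAt (fun y : ℝ => p * y) p x := by
          simpa using (hasDerivAt_id x).const_mul p
        exact (zeta_hasDerivAt N hN (p * x)).comp x hi
      have h2 : HasDerivAt (fun y : ℝ => (zeta (N + 1) y) ^ p)
          (1 * p * (zeta (N + 1) x) ^ (p - 1) * zeta N x) x := by
        have := ((zeta_hasDerivAt N hN x).rpow_const (Or.inr hp))
        convert this using 1
        ring
      exact h1.sub h2
    have hmono : MonotoneOn f (Set.Ici (0 : ℝ)) := by
      apply monotoneOn_of_deriv_nonneg (convex_Ici 0)
      · exact (Differentiable.continuous (fun x => (hderiv x).differentiableAt)).continuousOn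
      · exact fun x _ => (hderiv x).differentiableAt.differentiableWithinAt
      · intro x hx
        rw [interior_Ici] at hx
        have hx0 : (0 : ℝ) ≤ x := le_of_lt hx
        rw [(hderiv x).deriv]
        have hz1 : zeta (N + 1) x ≤ zeta N x := zeta_succ_le N hN x hx0
        have hz0 : 0 ≤ zeta (N + 1) x := zeta_nonneg _ x hx0
        have hz0' : 0 ≤ zeta N x := zeta_nonneg _ x hx0
        have hstep : (zeta (N + 1) x) ^ (p - 1) * zeta N x ≤ zeta N (p * x) := by
          rcases eq_or_lt_of_le hz0' with h0 | h0
          · have : zeta (N + 1) x ^ (p - 1) * zeta N x = 0 := by rw [← h0]; ring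
            rw [this]
            exact zeta_nonneg _ _ (by positivity)
          · calc (zeta (N + 1) x) ^ (p - 1) * zeta N x
                ≤ (zeta N x) ^ (p - 1) * zeta N x := by
                  apply mul_le_mul_of_nonneg_right _ hz0'
                  exact Real.rpow_le_rpow hz0 hz1 (by linarith)
              _ = (zeta N x) ^ p := by
                  rw [← Real.rpow_add_one (ne_of_gt h0)]
                  ring_nf
              _ ≤ zeta N (p * x) := ih x hx0
        nlinarith
    have h0 : f 0 = 0 := by
      have hz : zeta (N + 1) 0 = 0 := zeta_zero (N + 1) (by omega)
      simp [hf, hz, Real.zero_rpow (ne_of_gt hp0)]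
    have := hmono (Set.self_mem_Ici) (Set.mem_Ici.2 hs) hs
    rw [h0] at this
    simpa [hf, sub_nonneg] using this

theorem stmt1 (N : ℕ) (hN : 2 ≤ N) (s p : ℝ) (hs : 0 ≤ s) (hp : 1 ≤ p) :
    (zeta N s) ^ p ≤ zeta N (p * s) := by
  exact zeta_key p hp N (by omega) s hs
end

section
/- Let N ≥ 2 be an integer, ζ(N,s) = e^s - ∑_{k=0}^{N-2} s^k/k!, and let s, t ≥ 0 and μ, ν > 1 with 1/μ + 1/ν = 1. Then ζ(N, s+t) ≤ (1/μ) ζ(N, μ s) + (1/ν) ζ(N, ν t). -/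
lemma zeta_hasDerivAt_s3 (m : ℕ) (x : ℝ) : HasDerivAt (zeta (m + 1)) (zeta m x) x := by
  have hsum : HasDerivAt (fun x : ℝ => ∑ k ∈ Finset.range m, x ^ k / (Nat.factorial k : ℝ))
      (∑ k ∈ Finset.range m, (k : ℝ) * x ^ (k - 1) / (Nat.factorial k : ℝ)) x := by
    apply HasDerivAt.fun_sum
    intro k _
    exact (hasDerivAt_pow k x).div_const _
  have h := (Real.hasDerivAt_exp x).fun_sub hsum
  have hz : zeta (m + 1) = fun x : ℝ =>
      Real.exp x - ∑ k ∈ Finset.range m, x ^ k / (Nat.factorial k : ℝ) := by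
    funext y; simp [zeta]
  rw [hz]
  refine h.congr_deriv (Eq.symm ?_)
  unfold zeta
  congr 1
  cases m with
  | zero => simp
  | succ n =>
    rw [Finset.sum_range_succ']
    simp only [Nat.succ_sub_one]
    rw [show ((0:ℕ):ℝ) * x ^ (0-1) / (Nat.factorial 0 : ℝ) = 0 by simp]
    rw [add_zero]
    apply Finset.sum_congr rfl
    intro j _
    simp only [Nat.add_sub_cancel, Nat.factorial_succ]
    have hj : (j.factorial : ℝ) ≠ 0 := by positivity
    push_cast
    field_simp

lemma zeta_nonneg_s3 (m : ℕ) {x : ℝ} (hx : 0 ≤ x) : 0 ≤ zeta m x := by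
  have := Real.sum_le_exp_of_nonneg hx (m - 1)
  unfold zeta
  linarith

lemma zeta_convexOn (N : ℕ) (hN : 2 ≤ N) : ConvexOn ℝ (Set.Ici (0:ℝ)) (zeta N) := by
  obtain ⟨n, rfl⟩ : ∃ n, N = n + 1 + 1 := ⟨N - 2, by omega⟩
  have hd1 : deriv (zeta (n + 1 + 1)) = zeta (n + 1) := by
    funext x; exact (zeta_hasDerivAt_s3 (n + 1) x).deriv
  apply convexOn_of_deriv2_nonneg (convex_Ici 0)
  · exact fun x _ => ((zeta_hasDerivAt_s3 (n+1) x).continuousAt).continuousWithinAt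
  · exact fun x _ => ((zeta_hasDerivAt_s3 (n+1) x).differentiableAt).differentiableWithinAt
  · intro x _
    rw [hd1]
    exact ((zeta_hasDerivAt_s3 n x).differentiableAt).differentiableWithinAt
  · intro x hx
    rw [Function.iterate_succ, Function.iterate_one, Function.comp_apply]
    rw [hd1, (zeta_hasDerivAt_s3 n x).deriv]
    exact zeta_nonneg_s3 n (le_of_lt (by simpa using hx))

theorem stmt3 (N : ℕ) (hN : 2 ≤ N) (s t μ ν : ℝ) (hs : 0 ≤ s) (ht : 0 ≤ t)
    (hμ : 1 < μ) (hν : 1 < ν) (hconj : 1 / μ + 1 / ν = 1) :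
    zeta N (s + t) ≤ (1 / μ) * zeta N (μ * s) + (1 / ν) * zeta N (ν * t) := by
  have hμ0 : 0 < μ := by linarith
  have hν0 : 0 < ν := by linarith
  have hc := zeta_convexOn N hN
  have h := hc.2 (Set.mem_Ici.mpr (by positivity : (0:ℝ) ≤ μ * s))
    (Set.mem_Ici.mpr (by positivity : (0:ℝ) ≤ ν * t))
    (by positivity : (0:ℝ) ≤ 1/μ) (by positivity : (0:ℝ) ≤ 1/ν) hconj
  have he : (1/μ) • (μ * s) + (1/ν) • (ν * t) = s + t := by
    simp only [smul_eq_mul]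
    field_simp
  rw [he] at h
  simpa using h
end

section
/- Let N ≥ 2, α_0, b_1, b_2 > 0 and suppose f : ℝ^N × [0,∞) → ℝ satisfies |f(x,s)| ≤ b_1 s^{N-1} + b_2 ζ(N, α_0 s^{N/(N-1)}) where ζ(N,t) = e^t - ∑_{k=0}^{N-2} t^k/k!. Then there exist α_1 > α_0 and b_3 > 0 such that for all x ∈ ℝ^N and s ≥ 0, F(x,s) := ∫_0^s f(x,t)dt satisfies F(x,s) ≤ b_3 ζ(N, α_1 s^{N/(N-1)}). -/
lemma zeta_tsum (N : ℕ) (t : ℝ) :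
    zeta N t = ∑' k : ℕ, t ^ (k + (N - 1)) / ((k + (N - 1)).factorial : ℝ) := by
  have hs := Real.summable_pow_div_factorial t
  have h := Summable.sum_add_tsum_nat_add (N - 1) hs
  have he : Real.exp t = ∑' n : ℕ, t ^ n / (n.factorial : ℝ) := by
    rw [Real.exp_eq_exp_ℝ, NormedSpace.exp_eq_tsum_div]
  unfold zeta
  rw [he, ← h]
  ring

lemma summable_tail (N : ℕ) (t : ℝ) :
    Summable (fun k : ℕ => t ^ (k + (N - 1)) / ((k + (N - 1)).factorial : ℝ)) :=
  (summable_nat_add_iff (f := fun n : ℕ => t ^ n / (n.factorial : ℝ)) (N - 1)).2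
    (Real.summable_pow_div_factorial t)

lemma tail_nonneg (N : ℕ) {t : ℝ} (ht : 0 ≤ t) (k : ℕ) :
    0 ≤ t ^ (k + (N - 1)) / ((k + (N - 1)).factorial : ℝ) := by positivity

lemma zeta_nonneg_s15 (N : ℕ) {t : ℝ} (ht : 0 ≤ t) : 0 ≤ zeta N t := by
  rw [zeta_tsum]
  exact tsum_nonneg (tail_nonneg N ht)

lemma zeta_mono (N : ℕ) {a b : ℝ} (ha : 0 ≤ a) (hab : a ≤ b) : zeta N a ≤ zeta N b := by
  rw [zeta_tsum, zeta_tsum]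
  refine Summable.tsum_le_tsum (fun k => ?_) (summable_tail N a) (summable_tail N b)
  gcongr

lemma zeta_lower (N : ℕ) {t : ℝ} (ht : 0 ≤ t) :
    t ^ (N - 1) / ((N - 1).factorial : ℝ) ≤ zeta N t := by
  rw [zeta_tsum]
  have := Summable.le_tsum (summable_tail N t) 0 (fun i _ => tail_nonneg N ht i)
  simpa using this

lemma key (N : ℕ) {α u : ℝ} (hα : 0 < α) (hu : 0 ≤ u) :
    u * zeta N (α * u) ≤ (1 / α) * zeta N (2 * α * u) := by
  rw [zeta_tsum, zeta_tsum, ← tsum_mul_left, ← tsum_mul_left]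
  set m := N - 1 with hm
  set g : ℕ → ℝ := fun k => (1 / α) * ((2 * α * u) ^ (k + m) / ((k + m).factorial : ℝ)) with hg
  have hsum2 : Summable g := (summable_tail N (2 * α * u)).mul_left _
  have hshift : Summable (fun k : ℕ => g (k + 1)) := (summable_nat_add_iff (f := g) 1).2 hsum2
  have hgnn : ∀ k, 0 ≤ g k := by
    intro k
    have : (0:ℝ) ≤ 2 * α * u := by positivity
    rw [hg]; positivity
  calc ∑' k : ℕ, u * ((α * u) ^ (k + m) / ((k + m).factorial : ℝ))
      ≤ ∑' k : ℕ, g (k + 1) := by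
        refine Summable.tsum_le_tsum (fun k => ?_) ((summable_tail N (α * u)).mul_left u) hshift
        have hfacpos : (0:ℝ) < ((k + m).factorial : ℝ) := by positivity
        have hfac : (((k + 1) + m).factorial : ℝ) = (((k + m) : ℕ) + 1) * ((k + m).factorial : ℝ) := by
          have h1 : (k + 1) + m = (k + m) + 1 := by ring
          rw [h1, Nat.factorial_succ]
          push_cast
          ring
        have hle : ((k + m : ℕ) : ℝ) + 1 ≤ 2 ^ ((k + m) + 1) := by
          have h2 : (k + m) + 1 ≤ 2 ^ ((k + m) + 1) := Nat.le_of_lt Nat.lt_two_pow_self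
          exact_mod_cast h2
        have hC : (0:ℝ) ≤ α ^ (k + m) * u ^ ((k + m) + 1) := by positivity
        have hL : u * ((α * u) ^ (k + m) / ((k + m).factorial : ℝ))
            = (α ^ (k + m) * u ^ ((k + m) + 1)) / ((k + m).factorial : ℝ) := by
          rw [mul_pow, pow_succ]
          ring
        have hR : g (k + 1)
            = 2 ^ ((k + m) + 1) * (α ^ (k + m) * u ^ ((k + m) + 1))
              / ((((k + m) : ℕ) + 1) * ((k + m).factorial : ℝ)) := by
          rw [hg]
          simp only []
          rw [hfac]
          have h1 : (k + 1) + m = (k + m) + 1 := by ring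
          rw [h1, mul_pow, mul_pow, pow_succ, pow_succ, pow_succ]
          field_simp
        rw [hL, hR, div_le_div_iff₀ hfacpos (by positivity)]
        have hstep := mul_le_mul_of_nonneg_left hle (mul_nonneg hC hfacpos.le)
        nlinarith [hstep]
    _ ≤ ∑' k : ℕ, g k := by
        have h := Summable.sum_add_tsum_nat_add (f := g) 1 hsum2
        rw [Finset.sum_range_one] at h
        linarith [hgnn 0]

theorem stmt15 (N : ℕ) (hN : 2 ≤ N) (α₀ b₁ b₂ : ℝ)
    (hα₀ : 0 < α₀) (hb₁ : 0 < b₁) (hb₂ : 0 < b₂)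
    (f : EuclideanSpace ℝ (Fin N) → ℝ → ℝ) (hf : ∀ x, Continuous (f x))
    (hgrowth : ∀ x, ∀ s : ℝ, 0 ≤ s →
      |f x s| ≤ b₁ * s ^ (N - 1) + b₂ * zeta N (α₀ * s ^ ((N : ℝ) / ((N : ℝ) - 1)))) :
    ∃ α₁ : ℝ, α₀ < α₁ ∧ ∃ b₃ : ℝ, 0 < b₃ ∧
      ∀ x, ∀ s : ℝ, 0 ≤ s →
        (∫ t in (0 : ℝ)..s, f x t) ≤ b₃ * zeta N (α₁ * s ^ ((N : ℝ) / ((N : ℝ) - 1))) := by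
  set p : ℝ := (N : ℝ) / ((N : ℝ) - 1) with hp
  have hN1 : (1:ℝ) ≤ (N:ℝ) - 1 := by
    have : (2:ℝ) ≤ (N:ℝ) := by exact_mod_cast hN
    linarith
  have hp1 : 1 ≤ p := by
    rw [hp, le_div_iff₀ (by linarith)]
    linarith
  have hppos : 0 < p := lt_of_lt_of_le one_pos hp1
  refine ⟨2 * α₀, by linarith, b₁ * ((N - 1).factorial : ℝ) / (2 * α₀) ^ (N - 1) + b₂ * (1 + 1 / α₀),
    by positivity, fun x s hs => ?_⟩
  set u : ℝ := s ^ p with hu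
  have hu0 : 0 ≤ u := Real.rpow_nonneg hs p
  -- bound the integrand by its value at s
  set C : ℝ := b₁ * s ^ (N - 1) + b₂ * zeta N (α₀ * u) with hC
  have hint : (∫ t in (0:ℝ)..s, f x t) ≤ C * s := by
    have h1 : (∫ t in (0:ℝ)..s, f x t) ≤ ∫ t in (0:ℝ)..s, C := by
      refine intervalIntegral.integral_mono_on hs ((hf x).intervalIntegrable 0 s)
        intervalIntegrable_const (fun t ht => ?_)
      rcases ht with ⟨ht0, hts⟩
      have hb := hgrowth x t ht0
      have habs : f x t ≤ |f x t| := le_abs_self _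
      have h2 : t ^ (N - 1) ≤ s ^ (N - 1) := pow_le_pow_left₀ ht0 hts _
      have h3 : α₀ * t ^ p ≤ α₀ * u := by
        have := Real.rpow_le_rpow ht0 hts (le_of_lt hppos)
        nlinarith [this]
      have h4 : zeta N (α₀ * t ^ p) ≤ zeta N (α₀ * u) :=
        zeta_mono N (by positivity) h3
      rw [hC]
      nlinarith [h2, h4, hb, habs]
    have h2 : (∫ _t in (0:ℝ)..s, C) = C * s := by
      rw [intervalIntegral.integral_const, smul_eq_mul, sub_zero, mul_comm]
    linarith
  -- now bound C * s
  have hsN : s * s ^ (N - 1) = u ^ (N - 1) := by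
    rw [hu, ← Real.rpow_natCast (s ^ p) (N - 1), ← Real.rpow_mul hs]
    have hcast : ((N - 1 : ℕ) : ℝ) = (N : ℝ) - 1 := by
      have := Nat.cast_sub (by omega : 1 ≤ N) (R := ℝ)
      simpa using this
    rw [hcast, hp, div_mul_cancel₀ _ (by linarith : (N:ℝ) - 1 ≠ 0)]
    rw [show (N:ℝ) = ((N:ℕ):ℝ) from rfl, Real.rpow_natCast]
    have hNN : N - 1 + 1 = N := by omega
    rw [← hNN, pow_succ', Nat.add_sub_cancel]
  have hsu : s ≤ 1 + u := by
    rcases le_total s 1 with h | h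
    · linarith
    · have : s = s ^ (1:ℝ) := (Real.rpow_one s).symm
      have h2 : s ^ (1:ℝ) ≤ s ^ p := Real.rpow_le_rpow_of_exponent_le h hp1
      rw [Real.rpow_one] at h2
      linarith
  have hz0 : 0 ≤ zeta N (α₀ * u) := zeta_nonneg_s15 N (by positivity)
  have hz20 : 0 ≤ zeta N (2 * α₀ * u) := zeta_nonneg_s15 N (by positivity)
  -- piece 1 : b₁ * s^N = b₁ * u^(N-1) ≤ b₁ (N-1)!/(2α₀)^(N-1) ζ(2α₀ u)
  have hlow := zeta_lower N (t := 2 * α₀ * u) (by positivity)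
  have hpiece1 : s * (b₁ * s ^ (N - 1))
      ≤ (b₁ * ((N - 1).factorial : ℝ) / (2 * α₀) ^ (N - 1)) * zeta N (2 * α₀ * u) := by
    have h1 : s * (b₁ * s ^ (N - 1)) = b₁ * u ^ (N - 1) := by
      rw [← hsN]; ring
    rw [h1]
    have hApos : (0:ℝ) < (2 * α₀) ^ (N - 1) := by positivity
    have hFpos : (0:ℝ) < ((N - 1).factorial : ℝ) := by positivity
    have h2 : (2 * α₀ * u) ^ (N - 1) = (2 * α₀) ^ (N - 1) * u ^ (N - 1) := mul_pow _ _ _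
    rw [h2] at hlow
    have h3 := mul_le_mul_of_nonneg_left hlow
      (by positivity : (0:ℝ) ≤ b₁ * ((N - 1).factorial : ℝ) / (2 * α₀) ^ (N - 1))
    calc b₁ * u ^ (N - 1)
        = b₁ * ((N - 1).factorial : ℝ) / (2 * α₀) ^ (N - 1)
          * ((2 * α₀) ^ (N - 1) * u ^ (N - 1) / ((N - 1).factorial : ℝ)) := by
          field_simp
      _ ≤ _ := h3
  -- piece 2 : s * (b₂ ζ(α₀ u)) ≤ b₂ (1 + 1/α₀) ζ(2α₀ u)
  have hpiece2 : s * (b₂ * zeta N (α₀ * u)) ≤ (b₂ * (1 + 1 / α₀)) * zeta N (2 * α₀ * u) := by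
    have h1 : s * zeta N (α₀ * u) ≤ (1 + u) * zeta N (α₀ * u) :=
      mul_le_mul_of_nonneg_right hsu hz0
    have h2 : zeta N (α₀ * u) ≤ zeta N (2 * α₀ * u) :=
      zeta_mono N (by positivity) (by nlinarith)
    have h3 := key N hα₀ hu0
    nlinarith [h1, h2, h3]
  calc (∫ t in (0:ℝ)..s, f x t) ≤ C * s := hint
    _ = s * (b₁ * s ^ (N - 1)) + s * (b₂ * zeta N (α₀ * u)) := by rw [hC]; ring
    _ ≤ (b₁ * ((N - 1).factorial : ℝ) / (2 * α₀) ^ (N - 1) + b₂ * (1 + 1 / α₀))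
        * zeta N (2 * α₀ * u) := by linarith
end

section
/- Let N ≥ 2, 0 ≤ β < N, r > 0, and let m, β_0 > 0 satisfy β_0 > (N-β)^N/(α_0^{N-1} r^{N-β}) · e^{(N-β) m (N-2)!/N^N · r^N} for some α_0 > 0. Suppose a sequence t_n > 0 satisfies t_n^N ≥ c_0 (r/n)^{N-β} exp(α_0 ω_{N-1}^{-1/(N-1)} t_n^{N/(N-1)} (log n - m (N-2)!/N^N · r^N + o(1))) for a constant c_0 > 0 and t_n^N ≥ ((N-β)/N · α_N/α_0)^{N-1} with α_N = N ω_{N-1}^{1/(N-1)}. Then (t_n) is bounded and t_n^N → ((N-β)/N · α_N/α_0)^{N-1} as n → ∞. -/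
open Filter

/-- Analytic core: if `x n ≥ Bb` always and the log inequality
`K - D·log n + A·x n·(log n - C + e n) ≤ D'·log (x n)` holds for `n ≥ 2`,
with `A·Bb = D`, then `x n → Bb`. -/
lemma stmt16_aux (A Bb C K D D' : ℝ) (hA : 0 < A) (hB : 0 < Bb) (hD' : 0 < D')
    (x e : ℕ → ℝ) (he : Tendsto e atTop (nhds 0))
    (hxB : ∀ n, Bb ≤ x n)
    (hstar : ∀ n : ℕ, 2 ≤ n →
      K - D * Real.log n + A * x n * (Real.log n - C + e n) ≤ D' * Real.log (x n))
    (hABD : A * Bb = D) :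
    Tendsto x atTop (nhds Bb) := by
  rw [tendsto_order]
  constructor
  · intro a ha
    exact Eventually.of_forall fun n => lt_of_lt_of_le ha (hxB n)
  · intro b hb
    set b' : ℝ := (Bb + b) / 2 with hb'def
    have hb'B : Bb < b' := by rw [hb'def]; linarith
    have hb'b : b' < b := by rw [hb'def]; linarith
    have hγ : 0 < A * b' - D := by nlinarith
    set C₁ : ℝ := |C| + 1 with hC₁def
    have he1 : ∀ᶠ n in atTop, |e n| ≤ 1 := by
      obtain ⟨N₀, hN₀⟩ := Metric.tendsto_atTop.mp he 1 one_pos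
      filter_upwards [eventually_ge_atTop N₀] with n hn
      have := hN₀ n hn
      rw [Real.dist_eq, sub_zero] at this
      linarith
    have hlog : Tendsto (fun n : ℕ => Real.log n) atTop atTop :=
      Real.tendsto_log_atTop.comp tendsto_natCast_atTop_atTop
    filter_upwards [he1, hlog.eventually_ge_atTop ((D' + A * C₁) / A),
      hlog.eventually_ge_atTop ((b' * (D' + A * C₁) - K) / (A * b' - D) + 1),
      eventually_ge_atTop 2] with n h1 h2 h3 hn2
    by_contra hcon
    push_neg at hcon
    have hxb' : b' ≤ x n := le_trans hb'b.le hcon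
    have hxpos : 0 < x n := lt_of_lt_of_le hB (hxB n)
    have hlx : Real.log (x n) ≤ x n := by
      have := Real.log_le_sub_one_of_pos hxpos; linarith
    have hs := hstar n hn2
    have hb1 : Real.log n - C₁ ≤ Real.log n - C + e n := by
      have h1' := (abs_le.mp h1).1
      have := le_abs_self C
      rw [hC₁def]; linarith
    have hAx : 0 < A * x n := mul_pos hA hxpos
    have key : K - D * Real.log n + A * x n * (Real.log n - C₁) ≤ D' * x n := by
      have h4 := mul_le_mul_of_nonneg_left hb1 hAx.le
      have h5 : D' * Real.log (x n) ≤ D' * x n :=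
        mul_le_mul_of_nonneg_left hlx hD'.le
      linarith
    have hcoef : 0 ≤ A * Real.log n - A * C₁ - D' := by
      rw [div_le_iff₀ hA] at h2; linarith
    have hmono : b' * (A * Real.log n - A * C₁ - D') ≤ x n * (A * Real.log n - A * C₁ - D') :=
      mul_le_mul_of_nonneg_right hxb' hcoef
    have hq1 : b' * (D' + A * C₁) - K ≤ (A * b' - D) * (Real.log n - 1) := by
      rw [div_add' _ _ _ hγ.ne', div_le_iff₀ hγ] at h3
      nlinarith
    nlinarith [key, hmono, hq1, hγ]

theorem stmt16 (N : ℕ) (hN : 2 ≤ N) (β r m β₀ α₀ c₀ ω : ℝ)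
    (hβ0 : 0 ≤ β) (hβN : β < N) (hr : 0 < r) (hm : 0 < m) (hβ₀pos : 0 < β₀)
    (hα₀ : 0 < α₀) (hc₀ : 0 < c₀) (hω : 0 < ω)
    (hβ₀ : ((N : ℝ) - β) ^ N / (α₀ ^ (N - 1) * r ^ ((N : ℝ) - β)) *
        Real.exp (((N : ℝ) - β) * m * (Nat.factorial (N - 2) : ℝ) / (N : ℝ) ^ N * r ^ N)
        < β₀)
    (t : ℕ → ℝ) (ht : ∀ n, 0 < t n)
    (e : ℕ → ℝ) (he : Tendsto e atTop (nhds 0))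
    (hlow : ∀ n : ℕ, 2 ≤ n →
      c₀ * (r / n) ^ ((N : ℝ) - β) *
          Real.exp (α₀ * ω ^ (-(1 : ℝ) / ((N : ℝ) - 1)) * (t n) ^ ((N : ℝ) / ((N : ℝ) - 1)) *
            (Real.log n - m * (Nat.factorial (N - 2) : ℝ) / (N : ℝ) ^ N * r ^ N + e n))
        ≤ (t n) ^ N)
    (hgg : ∀ n, (((N : ℝ) - β) / N * ((N : ℝ) * ω ^ ((1 : ℝ) / ((N : ℝ) - 1)) / α₀)) ^ (N - 1)
        ≤ (t n) ^ N) :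
    BddAbove (Set.range t) ∧
      Tendsto (fun n => (t n) ^ N) atTop
        (nhds ((((N : ℝ) - β) / N * ((N : ℝ) * ω ^ ((1 : ℝ) / ((N : ℝ) - 1)) / α₀)) ^ (N - 1))) := by
  have hNr2 : (2 : ℝ) ≤ (N : ℝ) := by exact_mod_cast hN
  have hNm1 : (0 : ℝ) < (N : ℝ) - 1 := by linarith
  have hNpos : (0 : ℝ) < (N : ℝ) := by linarith
  have hNβ : (0 : ℝ) < (N : ℝ) - β := by linarith
  set A : ℝ := α₀ * ω ^ (-(1 : ℝ) / ((N : ℝ) - 1)) with hAdef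
  have hApos : 0 < A := mul_pos hα₀ (Real.rpow_pos_of_pos hω _)
  set B : ℝ := ((N : ℝ) - β) / N * ((N : ℝ) * ω ^ ((1 : ℝ) / ((N : ℝ) - 1)) / α₀) with hBdef
  have hBpos : 0 < B := by
    apply mul_pos (div_pos hNβ hNpos)
    exact div_pos (mul_pos hNpos (Real.rpow_pos_of_pos hω _)) hα₀
  have hAB : A * B = (N : ℝ) - β := by
    have hω1 : ω ^ (-(1 : ℝ) / ((N : ℝ) - 1)) * ω ^ ((1 : ℝ) / ((N : ℝ) - 1)) = 1 := by
      have h0 : -(1 : ℝ) / ((N : ℝ) - 1) + (1 : ℝ) / ((N : ℝ) - 1) = 0 := by ring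
      rw [← Real.rpow_add hω, h0, Real.rpow_zero]
    have h2 : A * B = ((N : ℝ) - β) *
        (ω ^ (-(1 : ℝ) / ((N : ℝ) - 1)) * ω ^ ((1 : ℝ) / ((N : ℝ) - 1))) := by
      rw [hAdef, hBdef]
      field_simp
    rw [h2, hω1, mul_one]
  -- the auxiliary sequence x n = t n ^ (N/(N-1))
  set x : ℕ → ℝ := fun n => t n ^ ((N : ℝ) / ((N : ℝ) - 1)) with hxdef
  have hxval : ∀ n, x n = t n ^ ((N : ℝ) / ((N : ℝ) - 1)) := fun n => rfl
  have hxpos : ∀ n, 0 < x n := fun n => Real.rpow_pos_of_pos (ht n) _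
  have hcast : ((N - 1 : ℕ) : ℝ) = (N : ℝ) - 1 := by
    rw [Nat.cast_sub (by omega)]; norm_num
  have hxpow : ∀ n, x n ^ (N - 1) = t n ^ N := by
    intro n
    rw [hxval, ← Real.rpow_natCast (t n ^ ((N : ℝ) / ((N : ℝ) - 1))) (N - 1), hcast,
      ← Real.rpow_mul (ht n).le, div_mul_cancel₀ _ hNm1.ne', Real.rpow_natCast]
  have hxB : ∀ n, B ≤ x n := by
    intro n
    have h := hgg n
    rw [← hxpow n] at h
    exact le_of_pow_le_pow_left₀ (by omega) (hxpos n).le h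
  -- the log form of hlow
  set C : ℝ := m * (Nat.factorial (N - 2) : ℝ) / (N : ℝ) ^ N * r ^ N with hCdef
  set K : ℝ := Real.log c₀ + ((N : ℝ) - β) * Real.log r with hKdef
  have hstar : ∀ n : ℕ, 2 ≤ n →
      K - ((N : ℝ) - β) * Real.log n + A * x n * (Real.log n - C + e n)
        ≤ ((N : ℝ) - 1) * Real.log (x n) := by
    intro n hn
    have hn0 : (0 : ℝ) < (n : ℝ) := by exact_mod_cast (by omega : 0 < n)
    have hq : 0 < r / (n : ℝ) := div_pos hr hn0
    have h := hlow n hn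
    have hP : (0 : ℝ) < c₀ * (r / n) ^ ((N : ℝ) - β) *
        Real.exp (A * x n * (Real.log n - C + e n)) := by positivity
    have hlogle := Real.log_le_log hP h
    rw [Real.log_mul (by positivity) (Real.exp_ne_zero _),
      Real.log_mul hc₀.ne' (by positivity), Real.log_exp,
      Real.log_rpow hq, Real.log_div hr.ne' hn0.ne', Real.log_pow] at hlogle
    have hlogx : Real.log (x n) = ((N : ℝ) / ((N : ℝ) - 1)) * Real.log (t n) := by
      rw [hxval, Real.log_rpow (ht n)]
    have hNlog : ((N : ℝ) - 1) * Real.log (x n) = (N : ℝ) * Real.log (t n) := by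
      rw [hlogx]; field_simp
    rw [hNlog, hKdef]
    push_cast at hlogle
    linarith
  have hxtend : Tendsto x atTop (nhds B) :=
    stmt16_aux A B C K ((N : ℝ) - β) ((N : ℝ) - 1) hApos hBpos hNm1 x e he hxB hstar hAB
  have hts : Tendsto (fun n => t n ^ N) atTop (nhds (B ^ (N - 1))) := by
    have h := hxtend.pow (N - 1)
    exact h.congr fun n => hxpow n
  refine ⟨?_, hts⟩
  obtain ⟨M, hM⟩ := hts.bddAbove_range
  refine ⟨max M 1, ?_⟩
  rintro y ⟨n, rfl⟩
  rcases le_or_gt (t n) 1 with h | h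
  · exact le_trans h (le_max_right _ _)
  · have h1 : t n ≤ t n ^ N := le_self_pow₀ h.le (by omega)
    have h2 : t n ^ N ≤ M := hM ⟨n, rfl⟩
    exact le_trans (le_trans h1 h2) (le_max_left _ _)
end
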